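/- Let g : ℝ^m → ℝ^n be continuously differentiable with its Jacobian Dg(x) of full rank n at a point x ∈ ℝ^m, and let f : ℝ^n → ℝ^p be locally bounded. Then F[f∘g](x) = F[f](g(x)). -/

import Mathlib

open MeasureTheory Set
open scoped ENNReal

noncomputable def eBall {ι : Type*} [Fintype ι] (x : ι → ℝ) (δ : ℝ) : Set (ι → ℝ) :=
  {y | Real.sqrt (∑ i, (y i - x i) ^ 2) < δ}

noncomputable def filippov {ι κ : Type*} [Fintype ι] [Fintype κ]
    (h : (ι → ℝ) → (κ → ℝ)) (x : ι → ℝ) : Set (κ → ℝ) :=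
  ⋂ (δ : ℝ) (_ : 0 < δ) (S : Set (ι → ℝ)) (_ : volume S = 0),
    closure (convexHull ℝ (h '' (eBall x δ \ S)))

/-- A map between finite-dimensional real coordinate spaces is locally bounded. -/
def LocBounded {ι κ : Type*} [Fintype ι] [Fintype κ] (f : (ι → ℝ) → (κ → ℝ)) : Prop :=
  ∀ x : ι → ℝ, ∃ δ : ℝ, 0 < δ ∧ Bornology.IsBounded (f '' eBall x δ)

section helpers

variable {ι : Type*} [Fintype ι]

lemma isOpen_eBall (x : ι → ℝ) (δ : ℝ) : IsOpen (eBall x δ) := by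
  have h : Continuous fun y : ι → ℝ => Real.sqrt (∑ i, (y i - x i) ^ 2) := by fun_prop
  exact isOpen_lt h continuous_const

lemma mem_eBall_self {x : ι → ℝ} {δ : ℝ} (hδ : 0 < δ) : x ∈ eBall x δ := by
  simp [eBall, hδ]

lemma eBall_mem_nhds {x : ι → ℝ} {δ : ℝ} (hδ : 0 < δ) : eBall x δ ∈ nhds x :=
  (isOpen_eBall x δ).mem_nhds (mem_eBall_self hδ)

lemma exists_eBall_subset {x : ι → ℝ} {U : Set (ι → ℝ)} (hU : U ∈ nhds x) :
    ∃ δ : ℝ, 0 < δ ∧ eBall x δ ⊆ U := by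
  obtain ⟨r, hr, hball⟩ := Metric.mem_nhds_iff.1 hU
  refine ⟨r, hr, fun y hy => hball ?_⟩
  have hy' : Real.sqrt (∑ i, (y i - x i) ^ 2) < r := hy
  rw [Metric.mem_ball, dist_pi_lt_iff hr]
  intro i
  have h1 : (y i - x i) ^ 2 ≤ ∑ j, (y j - x j) ^ 2 :=
    Finset.single_le_sum (f := fun j => (y j - x j) ^ 2) (fun j _ => sq_nonneg _)
      (Finset.mem_univ i)
  have h2 : Real.sqrt ((y i - x i) ^ 2) ≤ Real.sqrt (∑ j, (y j - x j) ^ 2) :=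
    Real.sqrt_le_sqrt h1
  rw [Real.sqrt_sq_eq_abs] at h2
  calc dist (y i) (x i) = |y i - x i| := Real.dist_eq _ _
    _ ≤ _ := h2
    _ < r := hy'

lemma filippov_subset_of {ι₁ ι₂ κ : Type*} [Fintype ι₁] [Fintype ι₂] [Fintype κ]
    {h₁ : (ι₁ → ℝ) → (κ → ℝ)} {h₂ : (ι₂ → ℝ) → (κ → ℝ)} {x₁ : ι₁ → ℝ} {x₂ : ι₂ → ℝ}
    (H : ∀ ε > (0:ℝ), ∀ T : Set (ι₂ → ℝ), volume T = 0 →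
      ∃ δ > (0:ℝ), ∃ S : Set (ι₁ → ℝ), volume S = 0 ∧
        h₁ '' (eBall x₁ δ \ S) ⊆ h₂ '' (eBall x₂ ε \ T)) :
    filippov h₁ x₁ ⊆ filippov h₂ x₂ := by
  intro z hz
  simp only [filippov, mem_iInter] at hz ⊢
  intro ε hε T hT
  obtain ⟨δ, hδ, S, hS, hsub⟩ := H ε hε T hT
  exact closure_mono (convexHull_mono hsub) (hz δ hδ S hS)

lemma null_image_linearEquiv {E F : Type*} [NormedAddCommGroup E] [NormedSpace ℝ E]
    [MeasurableSpace E] [BorelSpace E] [FiniteDimensional ℝ E]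
    [NormedAddCommGroup F] [NormedSpace ℝ F] [MeasurableSpace F] [BorelSpace F]
    [FiniteDimensional ℝ F]
    (μ : Measure E) (ν : Measure F) [μ.IsAddHaarMeasure] [ν.IsAddHaarMeasure]
    (L : E ≃L[ℝ] F) {s : Set E} (hs : μ s = 0) : ν (⇑L '' s) = 0 := by
  obtain ⟨t, hst, htm, ht0⟩ := exists_measurable_superset_of_null hs
  have habs : ν ≪ μ.map ⇑L := Measure.absolutelyContinuous_isAddHaarMeasure ν (μ.map ⇑L)
  have himg : ⇑L '' t = ⇑L.symm ⁻¹' t := by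
    ext w
    constructor
    · rintro ⟨v, hv, rfl⟩; simpa using hv
    · intro hw; exact ⟨L.symm w, hw, by simp⟩
  have hmap : (μ.map ⇑L) (⇑L '' t) = 0 := by
    rw [himg, Measure.map_apply L.continuous.measurable (L.symm.continuous.measurable htm)]
    have : ⇑L ⁻¹' (⇑L.symm ⁻¹' t) = t := by ext v; simp
    rw [this]; exact ht0
  exact measure_mono_null (image_mono hst) (habs hmap)

end helpers

/-- **Chain rule for the Filippov set-valued map (Proposition 1(2)).**
If `g : ℝ^m → ℝ^n` is `C¹` with surjective (full-rank-`n`) Jacobian at `x`, and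
`f : ℝ^n → ℝ^p` is locally bounded, then `F[f ∘ g](x) = F[f](g(x))`. -/
theorem filippov_comp {m n p : ℕ}
    (g : (Fin m → ℝ) → (Fin n → ℝ)) (hg : ContDiff ℝ 1 g)
    (x : Fin m → ℝ) (hrank : Function.Surjective (fderiv ℝ g x))
    (f : (Fin n → ℝ) → (Fin p → ℝ)) (hf : LocBounded f) :
    filippov (f ∘ g) x = filippov f (g x) := by
  classical
  set A := fderiv ℝ g x with hA
  have hgdiff : Differentiable ℝ g := hg.differentiable one_ne_zero
  have hprodHaar : (volume : Measure ((Fin n → ℝ) × (Fin (m - n) → ℝ))).IsAddHaarMeasure := by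
    rw [Measure.volume_eq_prod]; exact Measure.prod.instIsAddHaarMeasure _ _
  -- dimension counting
  have hrange : LinearMap.range (A : (Fin m → ℝ) →ₗ[ℝ] (Fin n → ℝ)) = ⊤ :=
    LinearMap.range_eq_top.2 hrank
  have hdim : n + Module.finrank ℝ (LinearMap.ker (A : (Fin m → ℝ) →ₗ[ℝ] (Fin n → ℝ))) = m := by
    have h := LinearMap.finrank_range_add_finrank_ker (A : (Fin m → ℝ) →ₗ[ℝ] (Fin n → ℝ))
    rwa [hrange, finrank_top, Module.finrank_fin_fun, Module.finrank_fin_fun] at h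
  have hmn : n ≤ m := le_of_add_le_left hdim.le
  have hker : Module.finrank ℝ (LinearMap.ker (A : (Fin m → ℝ) →ₗ[ℝ] (Fin n → ℝ))) = m - n := by
    omega
  obtain ⟨e₀⟩ : Nonempty ((LinearMap.ker (A : (Fin m → ℝ) →ₗ[ℝ] (Fin n → ℝ))) ≃ₗ[ℝ]
      (Fin (m - n) → ℝ)) :=
    FiniteDimensional.nonempty_linearEquiv_of_finrank_eq
      (by rw [hker, Module.finrank_fin_fun])
  obtain ⟨q, hq⟩ := Submodule.exists_isCompl (LinearMap.ker (A : (Fin m → ℝ) →ₗ[ℝ] (Fin n → ℝ)))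
  set P := (LinearMap.ker (A : (Fin m → ℝ) →ₗ[ℝ] (Fin n → ℝ))).linearProjOfIsCompl q hq with hP
  set L₀ : (Fin m → ℝ) →ₗ[ℝ] (Fin n → ℝ) × (Fin (m - n) → ℝ) :=
    (A : (Fin m → ℝ) →ₗ[ℝ] (Fin n → ℝ)).prod (e₀.toLinearMap ∘ₗ P) with hL₀
  have hzero : ∀ z, L₀ z = 0 → z = 0 := by
    intro z hz
    have h1 : A z = 0 := congrArg Prod.fst hz
    have h2 : e₀ (P z) = 0 := congrArg Prod.snd hz
    have h3 : P z = 0 := by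
      have := e₀.map_eq_zero_iff.1 h2
      exact this
    have hzker : z ∈ LinearMap.ker (A : (Fin m → ℝ) →ₗ[ℝ] (Fin n → ℝ)) := by
      simpa [LinearMap.mem_ker] using h1
    have h4 := Submodule.linearProjOfIsCompl_apply_left hq ⟨z, hzker⟩
    rw [hP] at h3
    erw [h3] at h4
    have := congrArg (Subtype.val) h4
    simpa using this.symm
  have hinj : Function.Injective ⇑L₀ := by
    intro u v huv
    have := hzero (u - v) (by rw [map_sub, huv, sub_self])
    exact sub_eq_zero.1 this
  have hsurj : Function.Surjective ⇑L₀ := by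
    refine (LinearMap.injective_iff_surjective_of_finrank_eq_finrank ?_).1 hinj
    rw [Module.finrank_fin_fun, Module.finrank_prod, Module.finrank_fin_fun,
      Module.finrank_fin_fun]
    omega
  set Le : (Fin m → ℝ) ≃ₗ[ℝ] (Fin n → ℝ) × (Fin (m - n) → ℝ) :=
    LinearEquiv.ofBijective L₀ ⟨hinj, hsurj⟩ with hLe
  set L : (Fin m → ℝ) ≃L[ℝ] (Fin n → ℝ) × (Fin (m - n) → ℝ) :=
    Le.toContinuousLinearEquiv with hL
  have hLapply : ∀ z, (L z).1 = A z := fun z => rfl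
  set L₂ : (Fin m → ℝ) →L[ℝ] (Fin (m - n) → ℝ) :=
    (ContinuousLinearMap.snd ℝ (Fin n → ℝ) (Fin (m - n) → ℝ)).comp
      (L : (Fin m → ℝ) →L[ℝ] (Fin n → ℝ) × (Fin (m - n) → ℝ)) with hL₂
  set Φ : (Fin m → ℝ) → (Fin n → ℝ) × (Fin (m - n) → ℝ) := fun z => (g z, L₂ z) with hΦdef
  have hΦcd : ContDiffAt ℝ 1 Φ x := (hg.contDiffAt).prodMk (L₂.contDiff.contDiffAt)
  have hΦfd : HasFDerivAt Φ (L : (Fin m → ℝ) →L[ℝ] (Fin n → ℝ) × (Fin (m - n) → ℝ)) x := by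
    have h1 : HasFDerivAt g A x := (hgdiff x).hasFDerivAt
    have h2 : HasFDerivAt (fun z => L₂ z) L₂ x := L₂.hasFDerivAt
    have h3 := h1.prodMk h2
    have heq : (A.prod L₂) = (L : (Fin m → ℝ) →L[ℝ] (Fin n → ℝ) × (Fin (m - n) → ℝ)) := by
      refine ContinuousLinearMap.ext fun z => Prod.ext ?_ rfl
      exact (hLapply z).symm
    rwa [heq] at h3
  set Φh := hΦcd.toOpenPartialHomeomorph Φ hΦfd one_ne_zero with hΦh'
  have hxsrc : x ∈ Φh.source := hΦcd.mem_toOpenPartialHomeomorph_source hΦfd one_ne_zero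
  have hΦh : ⇑Φh = Φ := hΦcd.toOpenPartialHomeomorph_coe hΦfd one_ne_zero
  have hinvcd : ContDiffAt ℝ 1 (⇑Φh.symm) (Φ x) := hΦcd.to_localInverse hΦfd one_ne_zero
  obtain ⟨V, hVopen, hVx, hVcd⟩ := hinvcd.contDiffOn' le_rfl (by simp)
  have hVdiff : DifferentiableOn ℝ (⇑Φh.symm) V := by
    have h : insert (Φ x) univ ∩ V = V := by simp
    rw [h] at hVcd
    exact hVcd.differentiableOn one_ne_zero
  apply subset_antisymm
  · -- F[f∘g](x) ⊆ F[f](g x)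
    apply filippov_subset_of
    intro ε hε T hT
    obtain ⟨T', hTT', hT'm, hT'0⟩ := exists_measurable_superset_of_null hT
    have hU : Φh.source ∩ (Φ ⁻¹' V) ∩ g ⁻¹' (eBall (g x) ε) ∈ nhds x := by
      refine Filter.inter_mem (Filter.inter_mem (Φh.open_source.mem_nhds hxsrc) ?_) ?_
      · exact hΦcd.continuousAt.preimage_mem_nhds (hVopen.mem_nhds hVx)
      · exact (hg.continuous.continuousAt).preimage_mem_nhds (eBall_mem_nhds hε)
    obtain ⟨δ, hδ, hδsub⟩ := exists_eBall_subset hU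
    refine ⟨δ, hδ, eBall x δ ∩ g ⁻¹' T', ?_, ?_⟩
    · -- the removed set is null
      set M := ⇑L.symm '' ((T' ×ˢ (univ : Set (Fin (m - n) → ℝ))) ∩ V) with hM
      have hMnull : volume M = 0 := by
        refine null_image_linearEquiv
          (volume : Measure ((Fin n → ℝ) × (Fin (m - n) → ℝ))) volume L.symm ?_
        refine measure_mono_null inter_subset_left ?_
        have hpp : ((volume : Measure (Fin n → ℝ)).prod volume)
            (T' ×ˢ (univ : Set (Fin (m - n) → ℝ))) = 0 := by
          rw [Measure.prod_prod, hT'0, zero_mul]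
        exact hpp
      have hdiff : DifferentiableOn ℝ (⇑Φh.symm ∘ ⇑L) M := by
        refine hVdiff.comp (L.differentiable.differentiableOn) ?_
        rintro w ⟨v, hv, rfl⟩
        simpa using hv.2
      have himg : volume ((⇑Φh.symm ∘ ⇑L) '' M) = 0 :=
        addHaar_image_eq_zero_of_differentiableOn_of_addHaar_eq_zero volume hdiff hMnull
      apply measure_mono_null _ himg
      rintro z ⟨hz1, hz2⟩
      have hzsrc : z ∈ Φh.source := (hδsub hz1).1.1
      have hzV : Φ z ∈ V := (hδsub hz1).1.2
      refine ⟨L.symm (Φ z), mem_image_of_mem _ ⟨Set.mk_mem_prod hz2 (mem_univ _), hzV⟩, ?_⟩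
      have : (⇑Φh.symm ∘ ⇑L) (L.symm (Φ z)) = Φh.symm (Φ z) := by
        simp [Function.comp_apply]
      rw [this, ← hΦh]
      exact Φh.left_inv hzsrc
    · -- images inclusion
      rw [Set.image_comp]
      apply image_mono
      rintro y ⟨z, ⟨hz1, hz2⟩, rfl⟩
      exact ⟨(hδsub hz1).2, fun hyT => hz2 ⟨hz1, hTT' hyT⟩⟩
  · -- F[f](g x) ⊆ F[f∘g](x)
    apply filippov_subset_of
    intro δ₀ hδ₀ S hS
    obtain ⟨δ, hδ, hδsub⟩ := exists_eBall_subset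
      (Filter.inter_mem (Φh.open_source.mem_nhds hxsrc) (eBall_mem_nhds hδ₀))
    have hEsub : eBall x δ ⊆ Φh.source := fun z hz => (hδsub hz).1
    have hΨdiff : Differentiable ℝ (⇑L.symm ∘ Φ) :=
      L.symm.differentiable.comp (hgdiff.prodMk L₂.differentiable)
    have hN0 : volume (Φ '' (S ∩ eBall x δ)) = 0 := by
      have h1 : volume ((⇑L.symm ∘ Φ) '' (S ∩ eBall x δ)) = 0 :=
        addHaar_image_eq_zero_of_differentiableOn_of_addHaar_eq_zero volume
          hΨdiff.differentiableOn (measure_mono_null inter_subset_left hS)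
      have h2 : Φ '' (S ∩ eBall x δ) = ⇑L '' ((⇑L.symm ∘ Φ) '' (S ∩ eBall x δ)) := by
        rw [← image_comp]
        apply image_congr
        intro z _
        simp
      rw [h2]
      exact null_image_linearEquiv _ _ L h1
    obtain ⟨N', hNN', hN'm, hN'0⟩ := exists_measurable_superset_of_null hN0
    have hW : IsOpen (Φ '' eBall x δ) := by
      rw [← hΦh]
      exact Φh.isOpen_image_of_subset_source (isOpen_eBall x δ) hEsub
    have hΦxW : Φ x ∈ Φ '' eBall x δ := mem_image_of_mem _ (mem_eBall_self hδ)
    have hnh : Φ '' eBall x δ ∈ nhds (g x, L₂ x) := hW.mem_nhds hΦxW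
    obtain ⟨U₁, hU₁, U₂, hU₂, hbox⟩ := mem_nhds_prod_iff.1 hnh
    obtain ⟨ε, hε, hεsub⟩ := exists_eBall_subset hU₁
    obtain ⟨ρ, hρ, hρsub⟩ := Metric.mem_nhds_iff.1 hU₂
    have hslices : (fun y => (volume : Measure (Fin (m - n) → ℝ)) (Prod.mk y ⁻¹' N'))
        =ᵐ[(volume : Measure (Fin n → ℝ))] 0 :=
      (Measure.measure_prod_null hN'm).1 hN'0
    set T := {y : Fin n → ℝ | (volume : Measure (Fin (m - n) → ℝ)) (Prod.mk y ⁻¹' N') ≠ 0}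
      with hTdef
    have hT0 : volume T = 0 := by
      rw [Filter.EventuallyEq, ae_iff] at hslices
      simpa [hTdef] using hslices
    refine ⟨ε, hε, T, hT0, ?_⟩
    rintro w ⟨y, ⟨hy1, hy2⟩, rfl⟩
    have hslice0 : (volume : Measure (Fin (m - n) → ℝ)) (Prod.mk y ⁻¹' N') = 0 := by
      by_contra h
      exact hy2 h
    have hk : ∃ k ∈ Metric.ball (L₂ x) ρ, (y, k) ∉ N' := by
      by_contra h
      push_neg at h
      have hsub : Metric.ball (L₂ x) ρ ⊆ Prod.mk y ⁻¹' N' := fun k hk => h k hk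
      exact absurd (measure_mono_null hsub hslice0)
        (Metric.measure_ball_pos volume _ hρ).ne'
    obtain ⟨k, hkball, hkN⟩ := hk
    have hyk : (y, k) ∈ Φ '' eBall x δ := hbox (Set.mk_mem_prod (hεsub hy1) (hρsub hkball))
    obtain ⟨z, hzE, hzΦ⟩ := hyk
    have hzS : z ∉ S := by
      intro hzS
      exact hkN (hNN' (by rw [← hzΦ]; exact mem_image_of_mem _ ⟨hzS, hzE⟩))
    have hgz : g z = y := congrArg Prod.fst hzΦ
    exact ⟨z, ⟨(hδsub hzE).2, hzS⟩, by simp [Function.comp_apply, hgz]⟩
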